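/- Fix reals 0 < c < p and parameters λ > 0, k ≥ 1. Let g(w) = λ·(ln(p/w))^{1/k} for w ∈ (c,p) (the inverse of the Weibull survival function scaled by p). Then the function L(w) = g(w)·(w - c) is concave on (c,p); specifically, L''(w) = -(λ/(k²w²))·(ln(p/w))^{1/k - 2}·( k(w+c)·ln(p/w) + (k-1)(w-c) ) ≤ 0 for all w ∈ (c,p). -/

import Mathlib

open Real Set

theorem stmt_5 (c p lam k : ℝ) (hc : 0 < c) (hcp : c < p)
    (hlam : 0 < lam) (hk : 1 ≤ k)
    (L : ℝ → ℝ)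
    (hL : ∀ w, L w = lam * (Real.log (p / w)) ^ ((1:ℝ) / k) * (w - c)) :
    (∀ w ∈ Set.Ioo c p,
      deriv (deriv L) w =
        -(lam / (k ^ 2 * w ^ 2)) * (Real.log (p / w)) ^ ((1:ℝ) / k - 2) *
          (k * (w + c) * Real.log (p / w) + (k - 1) * (w - c)) ∧
      deriv (deriv L) w ≤ 0) ∧
    ConcaveOn ℝ (Set.Ioo c p) L := by
  have hk0 : (0:ℝ) < k := lt_of_lt_of_le one_pos hk
  have hp : (0:ℝ) < p := hc.trans hcp
  set r : ℝ := 1 / k with hr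
  set v : ℝ → ℝ := fun x => Real.log p - Real.log x with hv
  -- On Ioi 0, L agrees with f
  have hLf : ∀ x ∈ Set.Ioi (0:ℝ), L x = lam * (v x) ^ r * (x - c) := by
    intro x hx
    rw [hL x, Real.log_div hp.ne' (ne_of_gt hx)]
  -- basic facts at points of Ioo
  have key : ∀ w ∈ Set.Ioo c p, 0 < w ∧ 0 < v w := by
    intro w hw
    have hw0 : 0 < w := hc.trans hw.1
    refine ⟨hw0, ?_⟩
    have : Real.log w < Real.log p := Real.log_lt_log hw0 hw.2
    simpa [hv] using sub_pos.mpr this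
  -- first derivative
  set D1 : ℝ → ℝ := fun x =>
    lam * ((-x⁻¹ * r * (v x) ^ (r - 1)) * (x - c) + (v x) ^ r) with hD1def
  have hd1 : ∀ w ∈ Set.Ioo c p, HasDerivAt L (D1 w) w := by
    intro w hw
    obtain ⟨hw0, hu⟩ := key w hw
    have hvd : HasDerivAt v (-w⁻¹) w := by
      simpa using (Real.hasDerivAt_log hw0.ne').const_sub (Real.log p)
    have hpow : HasDerivAt (fun x => (v x) ^ r) (-w⁻¹ * r * (v w) ^ (r - 1)) w :=
      hvd.rpow_const (Or.inl hu.ne')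
    have hf : HasDerivAt (fun x => lam * (v x) ^ r * (x - c))
        (lam * ((-w⁻¹ * r * (v w) ^ (r - 1)) * (w - c) + (v w) ^ r)) w := by
      have := ((hpow.const_mul lam).mul ((hasDerivAt_id w).sub_const c))
      simp only [id_eq, Pi.mul_def, Pi.add_def] at this
      convert this using 1
      all_goals try { ext x; ring }
      all_goals ring
    refine hf.congr_of_eventuallyEq ?_
    filter_upwards [Ioi_mem_nhds hw0] with x hx
    exact hLf x hx
  have hderivL : ∀ w ∈ Set.Ioo c p, deriv L w = D1 w := fun w hw => (hd1 w hw).deriv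
  -- second derivative of D1
  have hd2 : ∀ w ∈ Set.Ioo c p, HasDerivAt D1
      (lam * (((w ^ 2)⁻¹ * r * (v w) ^ (r - 1) +
          -w⁻¹ * r * (-w⁻¹ * (r - 1) * (v w) ^ (r - 1 - 1))) * (w - c)
        + (-w⁻¹ * r * (v w) ^ (r - 1)) * 1
        + -w⁻¹ * r * (v w) ^ (r - 1))) w := by
    intro w hw
    obtain ⟨hw0, hu⟩ := key w hw
    have hvd : HasDerivAt v (-w⁻¹) w := by
      simpa using (Real.hasDerivAt_log hw0.ne').const_sub (Real.log p)
    have hinv : HasDerivAt (fun x : ℝ => -x⁻¹) ((w ^ 2)⁻¹) w := by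
      simpa [Pi.neg_def] using (hasDerivAt_inv hw0.ne').neg
    have hpow1 : HasDerivAt (fun x => (v x) ^ (r - 1))
        (-w⁻¹ * (r - 1) * (v w) ^ (r - 1 - 1)) w := hvd.rpow_const (Or.inl hu.ne')
    have hpow : HasDerivAt (fun x => (v x) ^ r) (-w⁻¹ * r * (v w) ^ (r - 1)) w :=
      hvd.rpow_const (Or.inl hu.ne')
    -- A x = -x⁻¹ * r * v x ^ (r-1)
    have hA : HasDerivAt (fun x => -x⁻¹ * r * (v x) ^ (r - 1))
        ((w ^ 2)⁻¹ * r * (v w) ^ (r - 1) + -w⁻¹ * r * (-w⁻¹ * (r - 1) * (v w) ^ (r - 1 - 1))) w := by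
      have := (hinv.const_mul r).mul hpow1
      simp only [id_eq, Pi.mul_def, Pi.add_def] at this
      convert this using 1
      all_goals try { ext x; ring }
      all_goals ring
    have hAB : HasDerivAt (fun x => (-x⁻¹ * r * (v x) ^ (r - 1)) * (x - c) + (v x) ^ r)
        (((w ^ 2)⁻¹ * r * (v w) ^ (r - 1) +
          -w⁻¹ * r * (-w⁻¹ * (r - 1) * (v w) ^ (r - 1 - 1))) * (w - c)
        + (-w⁻¹ * r * (v w) ^ (r - 1)) * 1
        + -w⁻¹ * r * (v w) ^ (r - 1)) w := by
      have := (hA.mul ((hasDerivAt_id w).sub_const c)).add hpow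
      simp only [id_eq, Pi.mul_def, Pi.add_def] at this
      convert this using 1
      all_goals try { ext x; ring }
      all_goals ring
    simpa [hD1def] using hAB.const_mul lam
  -- deriv (deriv L) agrees with deriv D1 on Ioo
  have hdd : ∀ w ∈ Set.Ioo c p, deriv (deriv L) w =
      lam * (((w ^ 2)⁻¹ * r * (v w) ^ (r - 1) +
          -w⁻¹ * r * (-w⁻¹ * (r - 1) * (v w) ^ (r - 1 - 1))) * (w - c)
        + (-w⁻¹ * r * (v w) ^ (r - 1)) * 1
        + -w⁻¹ * r * (v w) ^ (r - 1)) := by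
    intro w hw
    have heq : deriv L =ᶠ[nhds w] D1 := by
      filter_upwards [isOpen_Ioo.mem_nhds hw] with x hx
      exact hderivL x hx
    rw [heq.deriv_eq]
    exact (hd2 w hw).deriv
  -- algebraic identification with the target formula
  have halg : ∀ w ∈ Set.Ioo c p,
      lam * (((w ^ 2)⁻¹ * r * (v w) ^ (r - 1) +
          -w⁻¹ * r * (-w⁻¹ * (r - 1) * (v w) ^ (r - 1 - 1))) * (w - c)
        + (-w⁻¹ * r * (v w) ^ (r - 1)) * 1
        + -w⁻¹ * r * (v w) ^ (r - 1)) =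
      -(lam / (k ^ 2 * w ^ 2)) * (Real.log (p / w)) ^ ((1:ℝ) / k - 2) *
          (k * (w + c) * Real.log (p / w) + (k - 1) * (w - c)) := by
    intro w hw
    obtain ⟨hw0, hu⟩ := key w hw
    have hlogeq : Real.log (p / w) = v w := Real.log_div hp.ne' hw0.ne'
    rw [hlogeq]
    set u := v w with hudef
    have h1 : u ^ (r - 1) = u ^ (r - 2) * u := by
      rw [show r - 1 = (r - 2) + 1 by ring, Real.rpow_add hu, Real.rpow_one]
    have h2 : r - 1 - 1 = r - 2 := by ring
    rw [h2, h1, hr]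
    have hkne : k ≠ 0 := hk0.ne'
    have hwne : w ≠ 0 := hw0.ne'
    field_simp
    ring
  -- sign
  have hsign : ∀ w ∈ Set.Ioo c p,
      -(lam / (k ^ 2 * w ^ 2)) * (Real.log (p / w)) ^ ((1:ℝ) / k - 2) *
          (k * (w + c) * Real.log (p / w) + (k - 1) * (w - c)) ≤ 0 := by
    intro w hw
    obtain ⟨hw0, hu⟩ := key w hw
    have hlogeq : Real.log (p / w) = v w := Real.log_div hp.ne' hw0.ne'
    rw [hlogeq]
    have hA : 0 < lam / (k ^ 2 * w ^ 2) :=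
      div_pos hlam (by positivity)
    have hB : 0 < (v w) ^ ((1:ℝ) / k - 2) := Real.rpow_pos_of_pos hu _
    have hC : 0 ≤ k * (w + c) * v w + (k - 1) * (w - c) := by
      have t1 : 0 ≤ k * (w + c) * v w := by
        have : 0 < w + c := by linarith [hw.1]
        positivity
      have t2 : 0 ≤ (k - 1) * (w - c) := by
        have : 0 ≤ w - c := by linarith [hw.1]
        have : 0 ≤ k - 1 := by linarith
        nlinarith [hw.1]
      linarith
    nlinarith [mul_nonneg (mul_nonneg (le_of_lt hA) (le_of_lt hB)) hC]
  constructor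
  · intro w hw
    refine ⟨(hdd w hw).trans (halg w hw), ?_⟩
    rw [(hdd w hw).trans (halg w hw)]
    exact hsign w hw
  · -- concavity
    refine concaveOn_of_deriv2_nonpos (convex_Ioo c p) ?_ ?_ ?_ ?_
    · intro w hw
      exact ((hd1 w hw).differentiableAt.continuousAt).continuousWithinAt
    · rw [interior_Ioo]
      intro w hw
      exact (hd1 w hw).differentiableAt.differentiableWithinAt
    · rw [interior_Ioo]
      intro w hw
      have heq : deriv L =ᶠ[nhds w] D1 := by
        filter_upwards [isOpen_Ioo.mem_nhds hw] with x hx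
        exact hderivL x hx
      exact ((hd2 w hw).differentiableAt.congr_of_eventuallyEq heq).differentiableWithinAt
    · rw [interior_Ioo]
      intro w hw
      have : deriv^[2] L w = deriv (deriv L) w := by
        simp [Function.iterate_succ, Function.comp]
      rw [this, (hdd w hw).trans (halg w hw)]
      exact hsign w hw
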